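/- arXiv:2306.02171 — 2 statements merged into one kernel-verified Lean document; each statement's English description precedes it below -/
import Mathlib

section
/- In the free metabelian Lie algebra on A, B, for i ≥ 1 and j ≥ 0 one has the operator identity τ_{i−1,j}∘ad_B = τ_{i,j} + ad_{σ_{i−1,j−1}} when j ≥ 1, and τ_{i−1,0}∘ad_B = τ_{i,0}, as endomorphisms of the Lie algebra. -/
variable (K : Type*) [Field K] [CharZero K]

/-- The free Lie algebra on two generators. -/
abbrev FL (K : Type*) [Field K] := FreeLieAlgebra K (Fin 2)

/-- The second derived ideal `[[L,L],[L,L]]` of the free Lie algebra. -/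
noncomputable def secondDerived (K : Type*) [Field K] : LieIdeal K (FL K) :=
  LieAlgebra.derivedSeries K (FL K) 2

/-- The free metabelian Lie algebra on two generators `A`, `B`. -/
abbrev W (K : Type*) [Field K] := FL K ⧸ secondDerived K

/-- The generator `A`. -/
noncomputable def genA (K : Type*) [Field K] : W K :=
  LieSubmodule.Quotient.mk (N := secondDerived K) (FreeLieAlgebra.of K 0)

/-- The generator `B`. -/
noncomputable def genB (K : Type*) [Field K] : W K :=
  LieSubmodule.Quotient.mk (N := secondDerived K) (FreeLieAlgebra.of K 1)

/-- `τ_{u,v} = ad_B^u ∘ ad_A^v` as an endomorphism of the free metabelian Lie algebra. -/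
noncomputable def tau (K : Type*) [Field K] (u v : ℕ) : Module.End K (W K) :=
  (LieAlgebra.ad K (W K) (genB K)) ^ u * (LieAlgebra.ad K (W K) (genA K)) ^ v

/-- `σ_{r,s} = ad_B^r ad_A^s [A,B]`. -/
noncomputable def sigma (K : Type*) [Field K] (r s : ℕ) : W K :=
  tau K r s ⁅genA K, genB K⁆

-- metabelian property
lemma metab (p q x y : W K) : ⁅⁅p, q⁆, ⁅x, y⁆⁆ = 0 := by
  obtain ⟨p', rfl⟩ := LieSubmodule.Quotient.surjective_mk' (secondDerived K) p
  obtain ⟨q', rfl⟩ := LieSubmodule.Quotient.surjective_mk' (secondDerived K) q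
  obtain ⟨x', rfl⟩ := LieSubmodule.Quotient.surjective_mk' (secondDerived K) x
  obtain ⟨y', rfl⟩ := LieSubmodule.Quotient.surjective_mk' (secondDerived K) y
  have h : ⁅⁅p', q'⁆, ⁅x', y'⁆⁆ ∈ secondDerived K := by
    apply LieSubmodule.lie_mem_lie
    · exact LieSubmodule.lie_mem_lie (LieSubmodule.mem_top _) (LieSubmodule.mem_top _)
    · exact LieSubmodule.lie_mem_lie (LieSubmodule.mem_top _) (LieSubmodule.mem_top _)
  show LieSubmodule.Quotient.mk (N := secondDerived K) ⁅⁅p', q'⁆, ⁅x', y'⁆⁆ = 0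
  exact LieSubmodule.Quotient.mk_eq_zero'.mpr h

-- ad of a bracket kills every ad
lemma ad_bracket_mul (p q x : W K) :
    LieAlgebra.ad K (W K) ⁅p, q⁆ * LieAlgebra.ad K (W K) x = 0 := by
  ext y
  simpa using metab K p q x y

lemma ad_mul (x y : W K) :
    LieAlgebra.ad K (W K) x * LieAlgebra.ad K (W K) y
      = LieAlgebra.ad K (W K) y * LieAlgebra.ad K (W K) x
        + LieAlgebra.ad K (W K) ⁅x, y⁆ := by
  letI := LieRing.ofAssociativeRing (A := Module.End K (W K))
  have := (LieAlgebra.ad K (W K)).map_lie x y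
  rw [Ring.lie_def] at this
  rw [this]; abel

/-- for `i ≥ 1`, one has `τ_{i−1,j}∘ad_B = τ_{i,j} + ad_{σ_{i−1,j−1}}` when
`j ≥ 1`, and `τ_{i−1,0}∘ad_B = τ_{i,0}`, as endomorphisms of the free metabelian Lie
algebra. -/
theorem stmt9 :
    ∀ i j : ℕ, 1 ≤ i →
      ((1 ≤ j →
          tau K (i - 1) j * LieAlgebra.ad K (W K) (genB K)
            = tau K i j + LieAlgebra.ad K (W K) (sigma K (i - 1) (j - 1))) ∧
        tau K (i - 1) 0 * LieAlgebra.ad K (W K) (genB K) = tau K i 0) := by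
  set adA := LieAlgebra.ad K (W K) (genA K) with hA
  set adB := LieAlgebra.ad K (W K) (genB K) with hB
  -- sigma is always a bracket
  have hsig : ∀ r s : ℕ, ∃ a b : W K, sigma K r s = ⁅a, b⁆ := by
    intro r s
    induction r with
    | zero =>
      induction s with
      | zero => exact ⟨genA K, genB K, by simp [sigma, tau]⟩
      | succ s ih =>
        refine ⟨genA K, sigma K 0 s, ?_⟩
        simp only [sigma, tau, pow_zero, one_mul, pow_succ']
        rw [Module.End.mul_apply]
        rfl
    | succ r ih =>
      refine ⟨genB K, sigma K r s, ?_⟩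
      simp only [sigma, tau, pow_succ']
      rw [mul_assoc, Module.End.mul_apply]
      rfl
  -- ad_v * ad_x = 0 for v = sigma
  have hzero : ∀ r s : ℕ, ∀ x : W K,
      LieAlgebra.ad K (W K) (sigma K r s) * LieAlgebra.ad K (W K) x = 0 := by
    intro r s x
    obtain ⟨a, b, h⟩ := hsig r s
    rw [h]; exact ad_bracket_mul K a b x
  -- sigma (r+1) s = adB (sigma r s), sigma 0 (s+1) = adA (sigma 0 s)
  have hsigB : ∀ r s : ℕ, sigma K (r + 1) s = adB (sigma K r s) := by
    intro r s
    simp only [sigma, tau, pow_succ']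
    rw [mul_assoc, Module.End.mul_apply]
  have hsigA : ∀ s : ℕ, sigma K 0 (s + 1) = adA (sigma K 0 s) := by
    intro s
    simp only [sigma, tau, pow_zero, one_mul, pow_succ']
    rw [Module.End.mul_apply]
  -- key lemma A : adA^(m+1) * adB = adB * adA^(m+1) + ad (sigma 0 m)
  have keyA : ∀ m : ℕ,
      adA ^ (m + 1) * adB = adB * adA ^ (m + 1) + LieAlgebra.ad K (W K) (sigma K 0 m) := by
    intro m
    induction m with
    | zero =>
      have h0 : sigma K 0 0 = ⁅genA K, genB K⁆ := by simp [sigma, tau]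
      rw [zero_add, pow_one, h0]
      exact ad_mul K (genA K) (genB K)
    | succ m ih =>
      have h1 : adA ^ (m + 1 + 1) = adA * adA ^ (m + 1) := pow_succ' _ _
      have h3 : LieAlgebra.ad K (W K) ⁅genA K, genB K⁆ * adA ^ (m + 1) = 0 := by
        rw [pow_succ' adA m, ← mul_assoc, ad_bracket_mul, zero_mul]
      have h4 : adA * LieAlgebra.ad K (W K) (sigma K 0 m)
          = LieAlgebra.ad K (W K) (sigma K 0 (m + 1)) := by
        rw [ad_mul K (genA K) (sigma K 0 m), hzero, zero_add, hsigA, hA,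
          LieAlgebra.ad_apply]
      rw [h1, mul_assoc, ih, mul_add, ← mul_assoc adA adB, ad_mul K (genA K) (genB K),
        add_mul, mul_assoc adB, ← h1, h3, h4]
      abel
  -- key lemma B : adB^r * ad (sigma 0 s) = ad (sigma r s)
  have keyB : ∀ r s : ℕ,
      adB ^ r * LieAlgebra.ad K (W K) (sigma K 0 s) = LieAlgebra.ad K (W K) (sigma K r s) := by
    intro r s
    induction r with
    | zero => rw [pow_zero, one_mul]
    | succ r ih =>
      rw [pow_succ', mul_assoc, ih, ad_mul K (genB K) (sigma K r s), hzero, zero_add, hsigB]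
      rfl
  intro i j hi
  obtain ⟨k, rfl⟩ := Nat.exists_eq_add_of_le hi
  simp only [Nat.add_sub_cancel_left, Nat.add_sub_cancel]
  constructor
  · intro hj
    obtain ⟨m, rfl⟩ := Nat.exists_eq_add_of_le hj
    simp only [Nat.add_sub_cancel_left, Nat.add_sub_cancel]
    have : (1 : ℕ) + k = k + 1 := by ring
    rw [this]
    have h1m : (1 : ℕ) + m = m + 1 := by ring
    rw [h1m]
    calc tau K k (m + 1) * adB
        = adB ^ k * (adA ^ (m + 1) * adB) := by rw [tau, mul_assoc]
      _ = adB ^ k * (adB * adA ^ (m + 1) + LieAlgebra.ad K (W K) (sigma K 0 m)) := by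
          rw [keyA m]
      _ = adB ^ (k + 1) * adA ^ (m + 1) + adB ^ k * LieAlgebra.ad K (W K) (sigma K 0 m) := by
          rw [mul_add, ← mul_assoc, ← pow_succ]
      _ = tau K (k + 1) (m + 1) + LieAlgebra.ad K (W K) (sigma K k m) := by
          rw [keyB, tau]
  · have : (1 : ℕ) + k = k + 1 := by ring
    rw [this]
    simp only [tau, pow_zero, mul_one]
    rw [← pow_succ]
end

section
/- Let w be the free metabelian Lie algebra on A, B over a field K of characteristic zero, realized inside End_K(w) via the adjoint representation. Then ad : w → End_K(w) is injective, and the image exp(ad(w)) (exponentials of adjoint operators, defined on the completion) is contained in the closed K-span of the operators τ_{u,v} = ad_B^u ad_A^v (u,v ≥ 0) and ad_{σ_{r,s}} (r,s ≥ 0). -/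
set_option linter.unusedSectionVars false
set_option maxHeartbeats 1000000
open MvPolynomial


variable (K : Type*) [Field K] [CharZero K]

section Aux1
omit [CharZero K]

noncomputable def pihom (K : Type*) [Field K] : FL K →ₗ⁅K⁆ W K :=
  { (secondDerived K).toSubmodule.mkQ with map_lie' := rfl }

lemma pihom_surj : Function.Surjective (pihom K) :=
  Submodule.Quotient.mk_surjective _

lemma derivedW2 : LieAlgebra.derivedSeries K (W K) 2 = ⊥ := by
  rw [← LieIdeal.derivedSeries_map_eq 2 (pihom_surj K), LieIdeal.map_eq_bot_iff]
  intro x hx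
  rw [LieHom.mem_ker]
  show Submodule.Quotient.mk x = 0
  rw [Submodule.Quotient.mk_eq_zero]
  exact hx

noncomputable abbrev D1 (K : Type*) [Field K] : LieIdeal K (W K) :=
  LieAlgebra.derivedSeries K (W K) 1

lemma bracket_mem_D1 (x y : W K) : ⁅x, y⁆ ∈ D1 K := by
  show ⁅x, y⁆ ∈ LieAlgebra.derivedSeriesOfIdeal K (W K) 1 ⊤
  rw [LieAlgebra.derivedSeriesOfIdeal_succ, LieAlgebra.derivedSeriesOfIdeal_zero]
  exact LieSubmodule.lie_mem_lie (LieSubmodule.mem_top x) (LieSubmodule.mem_top y)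

lemma bracket_D1_zero {c d : W K} (hc : c ∈ D1 K) (hd : d ∈ D1 K) : ⁅c, d⁆ = 0 := by
  have : ⁅c, d⁆ ∈ LieAlgebra.derivedSeries K (W K) 2 := by
    show ⁅c, d⁆ ∈ LieAlgebra.derivedSeriesOfIdeal K (W K) (1+1) ⊤
    rw [LieAlgebra.derivedSeriesOfIdeal_succ]
    exact LieSubmodule.lie_mem_lie hc hd
  rw [derivedW2] at this
  simpa using this

end Aux1

section Aux2
omit [CharZero K]

lemma ad_pow_mem_D1 (y : W K) (r : ℕ) {z : W K} (hz : z ∈ D1 K) :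
    ((LieAlgebra.ad K (W K) y) ^ r) z ∈ D1 K := by
  induction r with
  | zero => simpa using hz
  | succ r ih =>
    rw [pow_succ', Module.End.mul_apply, LieAlgebra.ad_apply]
    exact (D1 K).lie_mem ih

lemma adA_adB_pow (r : ℕ) {z : W K} (hz : z ∈ D1 K) :
    ⁅genA K, ((LieAlgebra.ad K (W K) (genB K)) ^ r) z⁆
      = ((LieAlgebra.ad K (W K) (genB K)) ^ r) ⁅genA K, z⁆ := by
  induction r with
  | zero => simp
  | succ r ih =>
    have hm : ((LieAlgebra.ad K (W K) (genB K)) ^ r) z ∈ D1 K :=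
      ad_pow_mem_D1 K _ _ hz
    rw [pow_succ', Module.End.mul_apply, Module.End.mul_apply, LieAlgebra.ad_apply,
      LieAlgebra.ad_apply, leibniz_lie, bracket_D1_zero K (bracket_mem_D1 K _ _) hm,
      zero_add, ih]

lemma sigma_eq (r s : ℕ) :
    sigma K r s = ((LieAlgebra.ad K (W K) (genB K)) ^ r)
      (((LieAlgebra.ad K (W K) (genA K)) ^ s) ⁅genA K, genB K⁆) := rfl

lemma sigma_mem_D1 (r s : ℕ) : sigma K r s ∈ D1 K := by
  rw [sigma_eq]
  exact ad_pow_mem_D1 K _ _ (ad_pow_mem_D1 K _ _ (bracket_mem_D1 K _ _))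

lemma lieB_sigma (r s : ℕ) : ⁅genB K, sigma K r s⁆ = sigma K (r + 1) s := by
  rw [sigma_eq, sigma_eq, pow_succ', Module.End.mul_apply, LieAlgebra.ad_apply]

lemma lieA_sigma (r s : ℕ) : ⁅genA K, sigma K r s⁆ = sigma K r (s + 1) := by
  rw [sigma_eq, sigma_eq,
    adA_adB_pow K r (ad_pow_mem_D1 K _ _ (bracket_mem_D1 K _ _)),
    pow_succ', Module.End.mul_apply, LieAlgebra.ad_apply]

lemma lie_sigma_sigma (r s p q : ℕ) : ⁅sigma K r s, sigma K p q⁆ = 0 :=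
  bracket_D1_zero K (sigma_mem_D1 K r s) (sigma_mem_D1 K p q)

lemma sigma_zero_zero : sigma K 0 0 = ⁅genA K, genB K⁆ := by
  simp [sigma_eq]

/-- The spanning set `{A, B} ∪ {σ_{r,s}}`. -/
noncomputable def genSet (K : Type*) [Field K] : Set (W K) :=
  {genA K, genB K} ∪ Set.range (fun p : ℕ × ℕ => sigma K p.1 p.2)

lemma sigma_mem_span (r s : ℕ) : sigma K r s ∈ Submodule.span K (genSet K) :=
  Submodule.subset_span (Or.inr ⟨(r, s), rfl⟩)

lemma genA_mem_span : genA K ∈ Submodule.span K (genSet K) :=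
  Submodule.subset_span (Or.inl (Or.inl rfl))

lemma genB_mem_span : genB K ∈ Submodule.span K (genSet K) :=
  Submodule.subset_span (Or.inl (Or.inr rfl))

lemma gen_lie_gen {x y : W K} (hx : x ∈ genSet K) (hy : y ∈ genSet K) :
    ⁅x, y⁆ ∈ Submodule.span K (genSet K) := by
  have key : ∀ z ∈ genSet K, ⁅genA K, z⁆ ∈ Submodule.span K (genSet K) ∧
      ⁅genB K, z⁆ ∈ Submodule.span K (genSet K) := by
    rintro z (⟨rfl | rfl⟩ | ⟨⟨r, s⟩, rfl⟩)
    · exact ⟨by rw [lie_self]; exact zero_mem _,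
        by rw [← lie_skew, ← sigma_zero_zero]; exact neg_mem (sigma_mem_span K 0 0)⟩
    · exact ⟨by rw [← sigma_zero_zero]; exact sigma_mem_span K 0 0,
        by rw [lie_self]; exact zero_mem _⟩
    · exact ⟨by rw [lieA_sigma]; exact sigma_mem_span K _ _,
        by rw [lieB_sigma]; exact sigma_mem_span K _ _⟩
  rcases hx with ⟨rfl | rfl⟩ | ⟨⟨r, s⟩, rfl⟩
  · exact (key y hy).1
  · exact (key y hy).2
  · rcases hy with ⟨rfl | rfl⟩ | ⟨⟨p, q⟩, rfl⟩
    · rw [← lie_skew]; exact neg_mem (key _ (Or.inr ⟨(r, s), rfl⟩)).1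
    · rw [← lie_skew]; exact neg_mem (key _ (Or.inr ⟨(r, s), rfl⟩)).2
    · rw [lie_sigma_sigma]; exact zero_mem _

/-- `{A, B} ∪ {σ_{r,s}}` spans a Lie subalgebra. -/
noncomputable def genSub (K : Type*) [Field K] : LieSubalgebra K (W K) :=
  { Submodule.span K (genSet K) with
    lie_mem' := by
      intro x y hx hy
      replace hx : x ∈ Submodule.span K (genSet K) := hx
      replace hy : y ∈ Submodule.span K (genSet K) := hy
      show ⁅x, y⁆ ∈ Submodule.span K (genSet K)
      induction hx using Submodule.span_induction with
      | mem a ha =>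
        induction hy using Submodule.span_induction with
        | mem b hb => exact gen_lie_gen K ha hb
        | zero => rw [lie_zero]; exact zero_mem _
        | add b c _ _ h1 h2 => rw [lie_add]; exact add_mem h1 h2
        | smul t b _ h1 => rw [lie_smul]; exact Submodule.smul_mem _ _ h1
      | zero => rw [zero_lie]; exact zero_mem _
      | add a b _ _ h1 h2 => rw [add_lie]; exact add_mem h1 h2
      | smul t a _ h1 => rw [smul_lie]; exact Submodule.smul_mem _ _ h1 }

lemma span_genSet_top : ∀ x : W K, x ∈ Submodule.span K (genSet K) := by
  have h0 : genA K ∈ genSub K := genA_mem_span K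
  have h1 : genB K ∈ genSub K := genB_mem_span K
  let g : FL K →ₗ⁅K⁆ genSub K :=
    FreeLieAlgebra.lift K ![⟨genA K, h0⟩, ⟨genB K, h1⟩]
  have hcomp : ∀ y : FL K, pihom K y = ((genSub K).incl.comp g) y := by
    intro y
    refine LieHom.congr_fun (FreeLieAlgebra.hom_ext fun i => ?_) y
    fin_cases i <;> simp [g, FreeLieAlgebra.lift_of_apply] <;> rfl
  intro x
  obtain ⟨y, rfl⟩ := pihom_surj K x
  rw [hcomp y]
  exact SetLike.coe_mem (g y)

noncomputable def adW (K : Type*) [Field K] (x : W K) : Module.End K (W K) :=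
  LieAlgebra.ad K (W K) x

lemma adW_apply (x y : W K) : adW K x y = ⁅x, y⁆ := rfl

lemma adW_comp_zero {c : W K} (hc : c ∈ D1 K) (y : W K) : adW K c * adW K y = 0 := by
  ext z
  rw [Module.End.mul_apply, adW_apply, adW_apply, LinearMap.zero_apply]
  exact bracket_D1_zero K hc (bracket_mem_D1 K y z)

lemma adW_mul_adW (x y : W K) :
    adW K x * adW K y = adW K ⁅x, y⁆ + adW K y * adW K x := by
  ext z
  rw [LinearMap.add_apply, Module.End.mul_apply, Module.End.mul_apply, adW_apply, adW_apply,
    adW_apply, adW_apply, adW_apply]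
  exact leibniz_lie x y z

lemma adB_mul_ad_sigma (p q : ℕ) :
    adW K (genB K) * adW K (sigma K p q) = adW K (sigma K (p + 1) q) := by
  rw [adW_mul_adW, adW_comp_zero K (sigma_mem_D1 K p q), add_zero, lieB_sigma]

lemma adA_mul_ad_sigma (p q : ℕ) :
    adW K (genA K) * adW K (sigma K p q) = adW K (sigma K p (q + 1)) := by
  rw [adW_mul_adW, adW_comp_zero K (sigma_mem_D1 K p q), add_zero, lieA_sigma]

lemma adB_pow_mul_ad_sigma (r p q : ℕ) :
    (adW K (genB K)) ^ r * adW K (sigma K p q) = adW K (sigma K (p + r) q) := by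
  induction r generalizing p with
  | zero => simp
  | succ r ih =>
    have h : p + 1 + r = p + (r + 1) := by omega
    rw [pow_succ, mul_assoc, adB_mul_ad_sigma, ih, h]

lemma adA_pow_mul_ad_sigma (r p q : ℕ) :
    (adW K (genA K)) ^ r * adW K (sigma K p q) = adW K (sigma K p (q + r)) := by
  induction r generalizing q with
  | zero => simp
  | succ r ih =>
    have h : q + 1 + r = q + (r + 1) := by omega
    rw [pow_succ, mul_assoc, adA_mul_ad_sigma, ih, h]

lemma adA_mul_adB_pow (u : ℕ) :
    adW K (genA K) * (adW K (genB K)) ^ (u + 1)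
      = (adW K (genB K)) ^ (u + 1) * adW K (genA K) + adW K (sigma K u 0) := by
  have base : adW K (genA K) * adW K (genB K)
      = adW K (genB K) * adW K (genA K) + adW K (sigma K 0 0) := by
    rw [adW_mul_adW, ← sigma_zero_zero]; abel
  induction u with
  | zero => simpa using base
  | succ u ih =>
    have e1 : (adW K (genB K)) ^ (u + 2) = adW K (genB K) * (adW K (genB K)) ^ (u + 1) :=
      pow_succ' _ _
    rw [e1, ← mul_assoc, base, add_mul, mul_assoc, ih, mul_add, ← mul_assoc, ← e1]
    have e2 : adW K (sigma K 0 0) * (adW K (genB K)) ^ (u + 1) = 0 := by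
      rw [pow_succ', ← mul_assoc, adW_comp_zero K (sigma_mem_D1 K 0 0), zero_mul]
    rw [e2, add_zero, adB_mul_ad_sigma]

/-- The spanning set of operators. -/
noncomputable def OpSet (K : Type*) [Field K] : Set (Module.End K (W K)) :=
  (Set.range fun p : ℕ × ℕ => tau K p.1 p.2) ∪
    (Set.range fun p : ℕ × ℕ => LieAlgebra.ad K (W K) (sigma K p.1 p.2))

lemma tau_def' (u v : ℕ) : tau K u v = (adW K (genB K)) ^ u * (adW K (genA K)) ^ v := rfl

lemma tau_mem_OpSpan (u v : ℕ) : tau K u v ∈ Submodule.span K (OpSet K) :=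
  Submodule.subset_span (Or.inl ⟨(u, v), rfl⟩)

lemma ad_sigma_mem_OpSpan (r s : ℕ) : adW K (sigma K r s) ∈ Submodule.span K (OpSet K) :=
  Submodule.subset_span (Or.inr ⟨(r, s), rfl⟩)

lemma adA_mul_tau (u v : ℕ) :
    adW K (genA K) * tau K u v ∈ Submodule.span K (OpSet K) := by
  cases u with
  | zero =>
    have : adW K (genA K) * tau K 0 v = tau K 0 (v + 1) := by
      rw [tau_def', tau_def', pow_zero, one_mul, one_mul, ← pow_succ']
    rw [this]; exact tau_mem_OpSpan K 0 (v + 1)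
  | succ u =>
    rw [tau_def', ← mul_assoc, adA_mul_adB_pow, add_mul, mul_assoc, ← pow_succ']
    refine add_mem (by rw [← tau_def']; exact tau_mem_OpSpan K _ _) ?_
    cases v with
    | zero => rw [pow_zero, mul_one]; exact ad_sigma_mem_OpSpan K u 0
    | succ v =>
      have : adW K (sigma K u 0) * (adW K (genA K)) ^ (v + 1) = 0 := by
        rw [pow_succ', ← mul_assoc, adW_comp_zero K (sigma_mem_D1 K u 0), zero_mul]
      rw [this]; exact zero_mem _

lemma adB_mul_tau (u v : ℕ) :
    adW K (genB K) * tau K u v = tau K (u + 1) v := by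
  rw [tau_def', tau_def', ← mul_assoc, ← pow_succ']

lemma ad_sigma_mul_tau (p q u v : ℕ) :
    adW K (sigma K p q) * tau K u v ∈ Submodule.span K (OpSet K) := by
  cases u with
  | zero =>
    cases v with
    | zero =>
      have : tau K 0 0 = 1 := by rw [tau_def', pow_zero, pow_zero, one_mul]
      rw [this, mul_one]; exact ad_sigma_mem_OpSpan K p q
    | succ v =>
      have : adW K (sigma K p q) * tau K 0 (v + 1) = 0 := by
        rw [tau_def', pow_zero, one_mul, pow_succ', ← mul_assoc,
          adW_comp_zero K (sigma_mem_D1 K p q), zero_mul]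
      rw [this]; exact zero_mem _
  | succ u =>
    have : adW K (sigma K p q) * tau K (u + 1) v = 0 := by
      rw [tau_def', pow_succ', mul_assoc, ← mul_assoc,
        adW_comp_zero K (sigma_mem_D1 K p q), zero_mul]
    rw [this]; exact zero_mem _

lemma gen_mul_op {y : W K} (hy : y ∈ genSet K) {e : Module.End K (W K)}
    (he : e ∈ OpSet K) : adW K y * e ∈ Submodule.span K (OpSet K) := by
  rcases he with ⟨⟨u, v⟩, rfl⟩ | ⟨⟨r, s⟩, rfl⟩ <;>
    rcases hy with ⟨rfl | rfl⟩ | ⟨⟨p, q⟩, rfl⟩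
  · exact adA_mul_tau K u v
  · rw [show (fun p : ℕ × ℕ => tau K p.1 p.2) (u, v) = tau K u v from rfl, adB_mul_tau]
    exact tau_mem_OpSpan K _ _
  · exact ad_sigma_mul_tau K p q u v
  · show adW K (genA K) * adW K (sigma K r s) ∈ _
    rw [adA_mul_ad_sigma]
    exact ad_sigma_mem_OpSpan K _ _
  · show adW K (genB K) * adW K (sigma K r s) ∈ _
    rw [adB_mul_ad_sigma]
    exact ad_sigma_mem_OpSpan K _ _
  · show adW K (sigma K p q) * adW K (sigma K r s) ∈ _
    rw [adW_comp_zero K (sigma_mem_D1 K p q)]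
    exact zero_mem _

lemma any_mul_op (x : W K) {e : Module.End K (W K)} (he : e ∈ OpSet K) :
    adW K x * e ∈ Submodule.span K (OpSet K) := by
  have hx := span_genSet_top K x
  induction hx using Submodule.span_induction with
  | mem y hy => exact gen_mul_op K hy he
  | zero =>
    rw [show adW K (0 : W K) = 0 from (LieAlgebra.ad K (W K)).map_zero, zero_mul]
    exact zero_mem _
  | add a b _ _ h1 h2 =>
    rw [show adW K (a + b) = adW K a + adW K b from (LieAlgebra.ad K (W K)).map_add a b,
      add_mul]
    exact add_mem h1 h2
  | smul t a _ h1 =>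
    rw [show adW K (t • a) = t • adW K a from (LieAlgebra.ad K (W K)).map_smul t a,
      smul_mul_assoc]
    exact Submodule.smul_mem _ _ h1

lemma any_mul_span (x : W K) {e : Module.End K (W K)}
    (he : e ∈ Submodule.span K (OpSet K)) :
    adW K x * e ∈ Submodule.span K (OpSet K) := by
  induction he using Submodule.span_induction with
  | mem f hf => exact any_mul_op K x hf
  | zero => rw [mul_zero]; exact zero_mem _
  | add a b _ _ h1 h2 => rw [mul_add]; exact add_mem h1 h2
  | smul t a _ h1 => rw [mul_smul_comm]; exact Submodule.smul_mem _ _ h1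

lemma pow_mem_OpSpan (x : W K) (n : ℕ) :
    (LieAlgebra.ad K (W K) x) ^ n ∈ Submodule.span K (OpSet K) := by
  induction n with
  | zero =>
    rw [pow_zero, show (1 : Module.End K (W K)) = tau K 0 0 from
      (by rw [tau_def', pow_zero, pow_zero, one_mul])]
    exact tau_mem_OpSpan K 0 0
  | succ n ih =>
    rw [pow_succ']
    exact any_mul_span K x ih

open MvPolynomial

def Md (K : Type*) [Field K] : Type _ := K × K × MvPolynomial (Fin 2) K

noncomputable instance : AddCommGroup (Md K) :=
  inferInstanceAs (AddCommGroup (K × K × MvPolynomial (Fin 2) K))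
noncomputable instance : Module K (Md K) :=
  inferInstanceAs (Module K (K × K × MvPolynomial (Fin 2) K))

/-- Construct an element. -/
def Md.mk' (a b : K) (p : MvPolynomial (Fin 2) K) : Md K := (a, b, p)

@[simp] lemma Md.mk'_1 (a b p) : (Md.mk' K a b p).1 = a := rfl
@[simp] lemma Md.mk'_21 (a b p) : (Md.mk' K a b p).2.1 = b := rfl
@[simp] lemma Md.mk'_22 (a b p) : (Md.mk' K a b p).2.2 = p := rfl

lemma Md.add_mk (a b p c d q) :
    Md.mk' K a b p + Md.mk' K c d q = Md.mk' K (a + c) (b + d) (p + q) := rfl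

lemma Md.smul_mk (t : K) (a b p) :
    t • Md.mk' K a b p = Md.mk' K (t * a) (t * b) (MvPolynomial.C t * p) := by
  refine congrArg (Prod.mk _) (congrArg (Prod.mk _) ?_)
  exact (MvPolynomial.smul_eq_C_mul p t)

lemma Md.zero_def : (0 : Md K) = Md.mk' K 0 0 0 := rfl

lemma Md.mk_eq_mk {a c b d : K} {p q : MvPolynomial (Fin 2) K} :
    Md.mk' K a b p = Md.mk' K c d q ↔ a = c ∧ b = d ∧ p = q := by
  unfold Md.mk'
  exact Prod.ext_iff.trans (and_congr Iff.rfl Prod.ext_iff)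

lemma Md.surj (x : Md K) : ∃ a b p, x = Md.mk' K a b p := by
  obtain ⟨a, b, p⟩ := x; exact ⟨a, b, p, rfl⟩

noncomputable def mbr (x y : Md K) : Md K :=
  Md.mk' K 0 0 (C x.1 * C y.2.1 - C y.1 * C x.2.1
    + (C x.1 * X 0 + C x.2.1 * X 1) * y.2.2
    - (C y.1 * X 0 + C y.2.1 * X 1) * x.2.2)

lemma mbr_mk (a b p c d q) :
    mbr K (Md.mk' K a b p) (Md.mk' K c d q)
      = Md.mk' K 0 0 (C a * C d - C c * C b + (C a * X 0 + C b * X 1) * q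
          - (C c * X 0 + C d * X 1) * p) := rfl

noncomputable instance : LieRing (Md K) where
  bracket := mbr K
  add_lie x y z := by
    obtain ⟨a, b, p, rfl⟩ := Md.surj K x
    obtain ⟨c, d, q, rfl⟩ := Md.surj K y
    obtain ⟨e, f, r, rfl⟩ := Md.surj K z
    show mbr K _ _ = mbr K _ _ + mbr K _ _
    rw [Md.add_mk, mbr_mk, mbr_mk, mbr_mk, Md.add_mk, Md.mk_eq_mk]
    refine ⟨by ring, by ring, by push_cast [map_add]; ring⟩
  lie_add x y z := by
    obtain ⟨a, b, p, rfl⟩ := Md.surj K x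
    obtain ⟨c, d, q, rfl⟩ := Md.surj K y
    obtain ⟨e, f, r, rfl⟩ := Md.surj K z
    show mbr K _ _ = mbr K _ _ + mbr K _ _
    rw [Md.add_mk, mbr_mk, mbr_mk, mbr_mk, Md.add_mk, Md.mk_eq_mk]
    refine ⟨by ring, by ring, by push_cast [map_add]; ring⟩
  lie_self x := by
    obtain ⟨a, b, p, rfl⟩ := Md.surj K x
    show mbr K _ _ = 0
    rw [mbr_mk, Md.zero_def, Md.mk_eq_mk]
    refine ⟨rfl, rfl, by ring⟩
  leibniz_lie x y z := by
    obtain ⟨a, b, p, rfl⟩ := Md.surj K x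
    obtain ⟨c, d, q, rfl⟩ := Md.surj K y
    obtain ⟨e, f, r, rfl⟩ := Md.surj K z
    show mbr K _ (mbr K _ _) = mbr K (mbr K _ _) _ + mbr K _ (mbr K _ _)
    rw [mbr_mk, mbr_mk, mbr_mk, mbr_mk, mbr_mk, mbr_mk, Md.add_mk, Md.mk_eq_mk]
    refine ⟨by ring, by ring, by push_cast [map_add, map_sub, map_mul, map_zero, map_one]; ring⟩

noncomputable instance : LieAlgebra K (Md K) where
  lie_smul t x y := by
    obtain ⟨a, b, p, rfl⟩ := Md.surj K x
    obtain ⟨c, d, q, rfl⟩ := Md.surj K y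
    show mbr K _ _ = t • mbr K _ _
    rw [Md.smul_mk, mbr_mk, mbr_mk, Md.smul_mk, Md.mk_eq_mk]
    refine ⟨by ring, by ring, by push_cast [map_mul, map_zero]; ring⟩

noncomputable def MdI (K : Type*) [Field K] : LieIdeal K (Md K) :=
  { carrier := {x : Md K | x.1 = 0 ∧ x.2.1 = 0}
    add_mem' := by
      rintro x y ⟨h1, h2⟩ ⟨h3, h4⟩
      exact ⟨by show x.1 + y.1 = 0; rw [h1, h3, add_zero],
        by show x.2.1 + y.2.1 = 0; rw [h2, h4, add_zero]⟩
    zero_mem' := ⟨rfl, rfl⟩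
    smul_mem' := by
      rintro t x ⟨h1, h2⟩
      exact ⟨by show t • x.1 = 0; rw [h1, smul_zero],
        by show t • x.2.1 = 0; rw [h2, smul_zero]⟩
    lie_mem := fun {x m} _ => ⟨rfl, rfl⟩ }

lemma lie_mem_MdI (x y : Md K) : ⁅x, y⁆ ∈ MdI K := ⟨rfl, rfl⟩

lemma MdI_lie_zero {x y : Md K} (hx : x ∈ MdI K) (hy : y ∈ MdI K) : ⁅x, y⁆ = 0 := by
  obtain ⟨a, b, p, rfl⟩ := Md.surj K x
  obtain ⟨c, d, q, rfl⟩ := Md.surj K y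
  have ha : a = 0 := hx.1
  have hb : b = 0 := hx.2
  have hc : c = 0 := hy.1
  have hd : d = 0 := hy.2
  subst ha hb hc hd
  show mbr K _ _ = 0
  rw [mbr_mk, Md.zero_def, Md.mk_eq_mk]
  refine ⟨rfl, rfl, by simp⟩

lemma derivedMd1_le : LieAlgebra.derivedSeries K (Md K) 1 ≤ MdI K := by
  show LieAlgebra.derivedSeriesOfIdeal K (Md K) (0 + 1) ⊤ ≤ MdI K
  rw [LieAlgebra.derivedSeriesOfIdeal_succ]
  rw [LieSubmodule.lie_le_iff]
  intro x _ m _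
  exact lie_mem_MdI K x m

lemma derivedMd2_bot : LieAlgebra.derivedSeries K (Md K) 2 = ⊥ := by
  rw [eq_bot_iff]
  show LieAlgebra.derivedSeriesOfIdeal K (Md K) (1 + 1) ⊤ ≤ ⊥
  rw [LieAlgebra.derivedSeriesOfIdeal_succ, LieSubmodule.lie_le_iff]
  intro x hx m hm
  rw [LieSubmodule.mem_bot]
  exact MdI_lie_zero K (derivedMd1_le K hx) (derivedMd1_le K hm)

noncomputable def phi (K : Type*) [Field K] : FL K →ₗ⁅K⁆ Md K :=
  FreeLieAlgebra.lift K ![Md.mk' K 1 0 0, Md.mk' K 0 1 0]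

lemma phi_ker : ∀ x ∈ secondDerived K, phi K x = 0 := by
  intro x hx
  have h1 : phi K x ∈ LieIdeal.map (phi K) (secondDerived K) := LieIdeal.mem_map hx
  have h2 := LieIdeal.derivedSeries_map_le (f := phi K) 2
  have h3 := h2 h1
  rw [derivedMd2_bot] at h3
  simpa using h3

noncomputable def phiW (K : Type*) [Field K] : W K →ₗ⁅K⁆ Md K :=
  { Submodule.liftQ (secondDerived K).toSubmodule (phi K).toLinearMap
      (fun x hx => LinearMap.mem_ker.mpr (phi_ker K x hx)) with
    map_lie' := by
      intro x y
      obtain ⟨a, rfl⟩ := pihom_surj K x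
      obtain ⟨b, rfl⟩ := pihom_surj K y
      rw [← (pihom K).map_lie]
      exact (phi K).map_lie a b }

lemma phiW_mk (a : FL K) : phiW K (Submodule.Quotient.mk a) = phi K a := rfl

lemma phiW_A : phiW K (genA K) = Md.mk' K 1 0 0 := by
  show phi K (FreeLieAlgebra.of K 0) = _
  rw [phi, FreeLieAlgebra.lift_of_apply]
  rfl

lemma phiW_B : phiW K (genB K) = Md.mk' K 0 1 0 := by
  show phi K (FreeLieAlgebra.of K 1) = _
  rw [phi, FreeLieAlgebra.lift_of_apply]
  rfl

lemma mbr_A_poly (p : MvPolynomial (Fin 2) K) :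
    ⁅Md.mk' K 1 0 0, Md.mk' K 0 0 p⁆ = Md.mk' K 0 0 (X 0 * p) := by
  show mbr K _ _ = _
  rw [mbr_mk, Md.mk_eq_mk]
  refine ⟨rfl, rfl, by simp⟩

lemma mbr_B_poly (p : MvPolynomial (Fin 2) K) :
    ⁅Md.mk' K 0 1 0, Md.mk' K 0 0 p⁆ = Md.mk' K 0 0 (X 1 * p) := by
  show mbr K _ _ = _
  rw [mbr_mk, Md.mk_eq_mk]
  refine ⟨rfl, rfl, by simp⟩

lemma mbr_A_B : ⁅Md.mk' K 1 0 0, Md.mk' K 0 1 0⁆ = Md.mk' K 0 0 1 := by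
  show mbr K _ _ = _
  rw [mbr_mk, Md.mk_eq_mk]
  refine ⟨rfl, rfl, by simp⟩

lemma phiW_sigma (r s : ℕ) :
    phiW K (sigma K r s) = Md.mk' K 0 0 (X 1 ^ r * X 0 ^ s) := by
  induction r with
  | zero =>
    induction s with
    | zero =>
      rw [sigma_zero_zero, (phiW K).map_lie, phiW_A, phiW_B, mbr_A_B]
      rw [Md.mk_eq_mk]
      exact ⟨rfl, rfl, by simp⟩
    | succ s ih =>
      rw [← lieA_sigma, (phiW K).map_lie, phiW_A, ih, mbr_A_poly, Md.mk_eq_mk]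
      exact ⟨rfl, rfl, by ring⟩
  | succ r ih =>
    rw [← lieB_sigma, (phiW K).map_lie, phiW_B, ih, mbr_B_poly, Md.mk_eq_mk]
    exact ⟨rfl, rfl, by ring⟩

noncomputable def inj3 (K : Type*) [Field K] : MvPolynomial (Fin 2) K →ₗ[K] Md K where
  toFun p := Md.mk' K 0 0 p
  map_add' p q := by rw [Md.add_mk, add_zero]
  map_smul' t p := by
    rw [RingHom.id_apply, Md.smul_mk, mul_zero, MvPolynomial.smul_eq_C_mul]

lemma inj3_inj : Function.Injective (inj3 K) := by
  intro p q h
  exact (Md.mk_eq_mk K |>.mp h).2.2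

lemma monomial_family_indep :
    LinearIndependent K
      (fun p : ℕ × ℕ => (X 1 : MvPolynomial (Fin 2) K) ^ p.1 * X 0 ^ p.2) := by
  have heq : (fun p : ℕ × ℕ => (X 1 : MvPolynomial (Fin 2) K) ^ p.1 * X 0 ^ p.2)
      = (fun d : Fin 2 →₀ ℕ => (MvPolynomial.monomial d) (1 : K)) ∘
        (fun p : ℕ × ℕ => Finsupp.single 1 p.1 + Finsupp.single 0 p.2) := by
    funext p
    simp only [Function.comp_apply, X_pow_eq_monomial, monomial_mul, mul_one]
  rw [heq]
  have hbasis : LinearIndependent K (fun d : Fin 2 →₀ ℕ => (MvPolynomial.monomial d) (1 : K)) := by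
    have := (MvPolynomial.basisMonomials (Fin 2) K).linearIndependent
    rwa [MvPolynomial.coe_basisMonomials] at this
  refine hbasis.comp _ ?_
  intro p q h
  have h1 := congrArg (fun f => f 1) h
  have h0 := congrArg (fun f => f 0) h
  simp only [Finsupp.add_apply, Finsupp.single_apply] at h1 h0
  norm_num at h1 h0
  exact Prod.ext h1 h0

lemma phiW_sigma_indep :
    LinearIndependent K (fun p : ℕ × ℕ => phiW K (sigma K p.1 p.2)) := by
  have heq : (fun p : ℕ × ℕ => phiW K (sigma K p.1 p.2))
      = (inj3 K) ∘ (fun p : ℕ × ℕ => (X 1 : MvPolynomial (Fin 2) K) ^ p.1 * X 0 ^ p.2) := by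
    funext p
    rw [Function.comp_apply, phiW_sigma]
    rfl
  rw [heq]
  exact (monomial_family_indep K).map' _ (LinearMap.ker_eq_bot.mpr (inj3_inj K))

lemma eq_zero_of_phiW_zero {c : W K}
    (hc : c ∈ Submodule.span K (Set.range fun p : ℕ × ℕ => sigma K p.1 p.2))
    (h0 : phiW K c = 0) : c = 0 := by
  rw [Finsupp.mem_span_range_iff_exists_finsupp] at hc
  obtain ⟨l, rfl⟩ := hc
  have hcomb : Finsupp.linearCombination K (fun p : ℕ × ℕ => phiW K (sigma K p.1 p.2)) l = 0 := by
    rw [Finsupp.linearCombination_apply, ← h0]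
    show l.sum (fun p a => a • (phiW K).toLinearMap (sigma K p.1 p.2))
      = (phiW K).toLinearMap (l.sum fun i a => a • sigma K i.1 i.2)
    rw [map_finsuppSum]
    exact Finsupp.sum_congr fun p _ => ((phiW K).toLinearMap.map_smul _ _).symm
  have hl := linearIndependent_iff.mp (phiW_sigma_indep K) l hcomb
  rw [hl, Finsupp.sum_zero_index]

lemma ad_eq_zero_imp {z : W K} (h : LieAlgebra.ad K (W K) z = 0) : z = 0 := by
  have hz : ∀ u : W K, ⁅z, u⁆ = 0 := fun u => by
    have hu := LinearMap.ext_iff.mp h u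
    rwa [LieAlgebra.ad_apply, LinearMap.zero_apply] at hu
  have hmem := span_genSet_top K z
  rw [genSet, Submodule.span_union, Submodule.mem_sup] at hmem
  obtain ⟨y, hy, c, hc, rfl⟩ := hmem
  rw [Submodule.mem_span_pair] at hy
  obtain ⟨α, β, rfl⟩ := hy
  have hcI : phiW K c ∈ MdI K := by
    have hsub : Submodule.span K (Set.range fun p : ℕ × ℕ => sigma K p.1 p.2) ≤
        (MdI K : Submodule K (Md K)).comap (phiW K).toLinearMap := by
      rw [Submodule.span_le]
      rintro _ ⟨p, rfl⟩
      show phiW K (sigma K p.1 p.2) ∈ MdI K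
      rw [phiW_sigma]
      exact ⟨rfl, rfl⟩
    exact hsub hc
  obtain ⟨e, f, P, hP⟩ := Md.surj K (phiW K c)
  have he : e = 0 := by have h1 := hcI.1; rwa [hP] at h1
  have hf : f = 0 := by have h1 := hcI.2; rwa [hP] at h1
  subst he hf
  have hz' : phiW K (α • genA K + β • genB K + c) = Md.mk' K α β P := by
    rw [map_add (phiW K), map_add (phiW K), map_smul (phiW K), map_smul (phiW K),
      phiW_A, phiW_B, hP, Md.smul_mk, Md.smul_mk, Md.add_mk, Md.add_mk, Md.mk_eq_mk]
    refine ⟨by ring, by ring, by simp⟩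
  have hB0 : phiW K ⁅α • genA K + β • genB K + c, genB K⁆ = 0 := by
    rw [hz]; exact (phiW K).map_zero
  rw [(phiW K).map_lie, hz', phiW_B] at hB0
  rw [show (⁅Md.mk' K α β P, Md.mk' K 0 1 0⁆ : Md K) = mbr K _ _ from rfl, mbr_mk,
    Md.zero_def, Md.mk_eq_mk] at hB0
  have hB1 : C α - X 1 * P = 0 := by
    calc C α - X 1 * P
        = C α * C 1 - C 0 * C β + (C α * X 0 + C β * X 1) * 0
          - (C 0 * X 0 + C 1 * X 1) * P := by simp
      _ = 0 := hB0.2.2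
  have hα : α = 0 := by
    have h1 := congrArg (MvPolynomial.constantCoeff) hB1
    simpa using h1
  have hP0 : P = 0 := by
    have hX : X 1 * P = 0 := by
      have h1 := hB1
      rw [hα, map_zero, zero_sub, neg_eq_zero] at h1
      exact h1
    rcases mul_eq_zero.mp hX with h1 | h1
    · exact absurd h1 (MvPolynomial.X_ne_zero 1)
    · exact h1
  have hA0 : phiW K ⁅α • genA K + β • genB K + c, genA K⁆ = 0 := by
    rw [hz]; exact (phiW K).map_zero
  rw [(phiW K).map_lie, hz', phiW_A] at hA0
  rw [show (⁅Md.mk' K α β P, Md.mk' K 1 0 0⁆ : Md K) = mbr K _ _ from rfl, mbr_mk,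
    Md.zero_def, Md.mk_eq_mk] at hA0
  have hA1 : -C β - X 0 * P = 0 := by
    calc -C β - X 0 * P
        = C α * C 0 - C 1 * C β + (C α * X 0 + C β * X 1) * 0
          - (C 1 * X 0 + C 0 * X 1) * P := by simp
      _ = 0 := hA0.2.2
  have hβ : β = 0 := by
    rw [hP0, mul_zero, sub_zero, neg_eq_zero] at hA1
    have h1 := congrArg (MvPolynomial.constantCoeff) hA1
    simpa using h1
  have hc0 : c = 0 := by
    apply eq_zero_of_phiW_zero K hc
    rw [hP, hP0]
    rfl
  rw [hα, hβ, hc0, zero_smul, zero_smul, add_zero, add_zero]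

theorem stmt15' :
    Function.Injective (fun x : W K => LieAlgebra.ad K (W K) x) ∧
    ∀ (x : W K) (n : ℕ),
      ((LieAlgebra.ad K (W K) x) ^ n : Module.End K (W K)) ∈
        Submodule.span K
          ((Set.range fun p : ℕ × ℕ => tau K p.1 p.2) ∪
            (Set.range fun p : ℕ × ℕ => LieAlgebra.ad K (W K) (sigma K p.1 p.2))) := by
  constructor
  · intro x y hxy
    simp only at hxy
    have hsub : LieAlgebra.ad K (W K) (x - y) = 0 := by
      rw [map_sub (LieAlgebra.ad K (W K)), hxy, sub_self]
    exact sub_eq_zero.mp (ad_eq_zero_imp K hsub)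
  · exact fun x n => pow_mem_OpSpan K x n

end Aux2

/-- the adjoint representation `ad : w → End_K(w)` of the free metabelian Lie
algebra on `A`, `B` is injective, and every power `ad_x^n` (hence every partial sum of
`exp(ad_x)`, and therefore `exp(ad(w))` in the completion) lies in the `K`-span of the
operators `τ_{u,v} = ad_B^u ad_A^v` and `ad_{σ_{r,s}}`. -/
theorem stmt15 :
    Function.Injective (fun x : W K => LieAlgebra.ad K (W K) x) ∧
    ∀ (x : W K) (n : ℕ),
      ((LieAlgebra.ad K (W K) x) ^ n : Module.End K (W K)) ∈
        Submodule.span K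
          ((Set.range fun p : ℕ × ℕ => tau K p.1 p.2) ∪
            (Set.range fun p : ℕ × ℕ => LieAlgebra.ad K (W K) (sigma K p.1 p.2))) := by
  exact stmt15' K
end
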